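/- Let 𝒳, 𝒱, 𝒲 be real Banach spaces and 𝒰 a nonempty subset of 𝒱. Let 𝒥 : 𝒳 × 𝒰 → ℝ and Γ : 𝒳 × 𝒰 → 𝒲 be of class C¹ on 𝒳 × 𝒰 (i.e. they admit C¹ extensions to 𝒳 × 𝒰₁ for some open set 𝒰₁ ⊇ 𝒰). Let (x̂, û) maximize 𝒥(x, u) over all (x, u) ∈ 𝒳 × 𝒰 with Γ(x, u) = 0. Assume that the partial Fréchet differential D₁Γ(x̂, û) : 𝒳 → 𝒲 is an invertible continuous linear map and that 𝒰 is star-shaped with respect to û. Then there exists a continuous linear functional M ∈ 𝒲* such that: (i) D₁𝒥(x̂, û) + M ∘ D₁Γ(x̂, û) = 0; (ii) for all u ∈ 𝒰, ⟨D₂𝒥(x̂, û) + M ∘ D₂Γ(x̂, û), u − û⟩ ≤ 0. -/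

import Mathlib

open Filter Topology Set

/-- Lemma 5.1, Karush–Kuhn–Tucker type multiplier rule. Let `𝒳, 𝒱, 𝒲`
be real Banach spaces and `𝒰` a nonempty subset of `𝒱`.  Let `𝒥 : 𝒳 × 𝒰 → ℝ` and
`Γ : 𝒳 × 𝒰 → 𝒲` be of class `C¹` on `𝒳 × 𝒰` (here: total functions which are `C¹` on
`univ ×ˢ 𝒰₁` for an open `𝒰₁ ⊇ 𝒰`; such functions are their own `C¹` extensions).
Let `(xhat, uhat)` maximize `𝒥` subject to `Γ(x, u) = 0`, `u ∈ 𝒰`.  Assume `D₁Γ(xhat, uhat)` is an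
invertible continuous linear map and `𝒰` is star-shaped with respect to `uhat`.  Then there
is `M ∈ 𝒲*` with (i) `D₁𝒥(xhat, uhat) + M ∘ D₁Γ(xhat, uhat) = 0` and
(ii) `⟨D₂𝒥(xhat, uhat) + M ∘ D₂Γ(xhat, uhat), u − uhat⟩ ≤ 0` for all `u ∈ 𝒰`. -/
theorem stmt_10 {𝒳 𝒱 𝒲 : Type*}
    [NormedAddCommGroup 𝒳] [NormedSpace ℝ 𝒳] [CompleteSpace 𝒳]
    [NormedAddCommGroup 𝒱] [NormedSpace ℝ 𝒱] [CompleteSpace 𝒱]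
    [NormedAddCommGroup 𝒲] [NormedSpace ℝ 𝒲] [CompleteSpace 𝒲]
    (𝒰 : Set 𝒱) (h𝒰 : 𝒰.Nonempty)
    (𝒰₁ : Set 𝒱) (h𝒰₁open : IsOpen 𝒰₁) (h𝒰𝒰₁ : 𝒰 ⊆ 𝒰₁)
    (𝒥 : 𝒳 → 𝒱 → ℝ) (Γ : 𝒳 → 𝒱 → 𝒲)
    (h𝒥 : ContDiffOn ℝ 1 (fun q : 𝒳 × 𝒱 => 𝒥 q.1 q.2) (Set.univ ×ˢ 𝒰₁))
    (hΓ : ContDiffOn ℝ 1 (fun q : 𝒳 × 𝒱 => Γ q.1 q.2) (Set.univ ×ˢ 𝒰₁))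
    (xhat : 𝒳) (uhat : 𝒱) (huhat : uhat ∈ 𝒰) (hfeas : Γ xhat uhat = 0)
    (hmax : ∀ x : 𝒳, ∀ u ∈ 𝒰, Γ x u = 0 → 𝒥 x u ≤ 𝒥 xhat uhat)
    (hinv : ∃ e : 𝒳 ≃L[ℝ] 𝒲, (e : 𝒳 →L[ℝ] 𝒲) = fderiv ℝ (fun x => Γ x uhat) xhat)
    (hstar : StarConvex ℝ uhat 𝒰) :
    ∃ M : 𝒲 →L[ℝ] ℝ,
      (fderiv ℝ (fun x => 𝒥 x uhat) xhat + M.comp (fderiv ℝ (fun x => Γ x uhat) xhat) = 0) ∧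
      (∀ u ∈ 𝒰,
        fderiv ℝ (fun v => 𝒥 xhat v) uhat (u - uhat) + M (fderiv ℝ (fun v => Γ xhat v) uhat (u - uhat)) ≤ 0) := by
  classical
  obtain ⟨e, he⟩ := hinv
  set p : 𝒳 × 𝒱 := (xhat, uhat) with hp
  have hopen : IsOpen ((Set.univ : Set 𝒳) ×ˢ 𝒰₁) := isOpen_univ.prod h𝒰₁open
  have hmem : ((Set.univ : Set 𝒳) ×ˢ 𝒰₁) ∈ 𝓝 p := hopen.mem_nhds ⟨trivial, h𝒰𝒰₁ huhat⟩
  have hJat : ContDiffAt ℝ 1 (fun q : 𝒳 × 𝒱 => 𝒥 q.1 q.2) p := h𝒥.contDiffAt hmem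
  have hGat : ContDiffAt ℝ 1 (fun q : 𝒳 × 𝒱 => Γ q.1 q.2) p := hΓ.contDiffAt hmem
  set J : 𝒳 × 𝒱 →L[ℝ] ℝ := fderiv ℝ (fun q : 𝒳 × 𝒱 => 𝒥 q.1 q.2) p with hJdef
  set A : 𝒳 × 𝒱 →L[ℝ] 𝒲 := fderiv ℝ (fun q : 𝒳 × 𝒱 => Γ q.1 q.2) p with hAdef
  have hJs : HasStrictFDerivAt (fun q : 𝒳 × 𝒱 => 𝒥 q.1 q.2) J p :=
    hJat.hasStrictFDerivAt one_ne_zero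
  have hGs : HasStrictFDerivAt (fun q : 𝒳 × 𝒱 => Γ q.1 q.2) A p :=
    hGat.hasStrictFDerivAt one_ne_zero
  -- partial derivatives
  have hD1J : fderiv ℝ (fun x => 𝒥 x uhat) xhat = J.comp (ContinuousLinearMap.inl ℝ 𝒳 𝒱) :=
    (hJs.hasFDerivAt.comp (g := fun q : 𝒳 × 𝒱 => 𝒥 q.1 q.2) (f := fun x => (x, uhat)) xhat (hasFDerivAt_prodMk_left xhat uhat)).fderiv
  have hD2J : fderiv ℝ (fun v => 𝒥 xhat v) uhat = J.comp (ContinuousLinearMap.inr ℝ 𝒳 𝒱) :=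
    (hJs.hasFDerivAt.comp (g := fun q : 𝒳 × 𝒱 => 𝒥 q.1 q.2) (f := fun v => (xhat, v)) uhat (hasFDerivAt_prodMk_right xhat uhat)).fderiv
  have hD1G : fderiv ℝ (fun x => Γ x uhat) xhat = A.comp (ContinuousLinearMap.inl ℝ 𝒳 𝒱) :=
    (hGs.hasFDerivAt.comp (g := fun q : 𝒳 × 𝒱 => Γ q.1 q.2) (f := fun x => (x, uhat)) xhat (hasFDerivAt_prodMk_left xhat uhat)).fderiv
  have hD2G : fderiv ℝ (fun v => Γ xhat v) uhat = A.comp (ContinuousLinearMap.inr ℝ 𝒳 𝒱) :=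
    (hGs.hasFDerivAt.comp (g := fun q : 𝒳 × 𝒱 => Γ q.1 q.2) (f := fun v => (xhat, v)) uhat (hasFDerivAt_prodMk_right xhat uhat)).fderiv
  set A2 : 𝒱 →L[ℝ] 𝒲 := A.comp (ContinuousLinearMap.inr ℝ 𝒳 𝒱) with hA2def
  have heA : ∀ ξ : 𝒳, e ξ = A (ξ, 0) := by
    intro ξ
    have : (e : 𝒳 →L[ℝ] 𝒲) ξ = (A.comp (ContinuousLinearMap.inl ℝ 𝒳 𝒱)) ξ := by
      rw [he, hD1G]
    simpa using this
  have hAsplit : ∀ ξ : 𝒳, ∀ η : 𝒱, A (ξ, η) = e ξ + A2 η := by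
    intro ξ η
    have h : ((ξ, η) : 𝒳 × 𝒱) = (ξ, 0) + ((0 : 𝒳), η) := by simp
    rw [h, map_add, heA ξ]
    rfl
  -- the equivalence q ↦ (A q, q.2)
  set f1 : 𝒳 × 𝒱 →L[ℝ] 𝒲 × 𝒱 := A.prod (ContinuousLinearMap.snd ℝ 𝒳 𝒱) with hf1def
  set f2 : 𝒲 × 𝒱 →L[ℝ] 𝒳 × 𝒱 :=
    ((e.symm : 𝒲 →L[ℝ] 𝒳).comp ((ContinuousLinearMap.fst ℝ 𝒲 𝒱)
        - A2.comp (ContinuousLinearMap.snd ℝ 𝒲 𝒱))).prod (ContinuousLinearMap.snd ℝ 𝒲 𝒱)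
    with hf2def
  have hf1app : ∀ q : 𝒳 × 𝒱, f1 q = (A q, q.2) := fun q => rfl
  have hf2app : ∀ r : 𝒲 × 𝒱, f2 r = (e.symm (r.1 - A2 r.2), r.2) := by
    intro r
    simp [hf2def]
  have h21 : Function.LeftInverse f2 f1 := by
    rintro ⟨ξ, η⟩
    rw [hf1app, hf2app]
    simp [hAsplit ξ η]
  have h12 : Function.RightInverse f2 f1 := by
    rintro ⟨w, η⟩
    rw [hf2app, hf1app, hAsplit]
    simp
  set Φe : (𝒳 × 𝒱) ≃L[ℝ] (𝒲 × 𝒱) := ContinuousLinearEquiv.equivOfInverse f1 f2 h21 h12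
    with hΦedef
  set Φ : 𝒳 × 𝒱 → 𝒲 × 𝒱 := fun q => (Γ q.1 q.2, q.2) with hΦdef
  have hcoe : ((Φe : (𝒳 × 𝒱) →L[ℝ] (𝒲 × 𝒱))) = f1 := by
    apply ContinuousLinearMap.ext; intro q
    simp [hΦedef]
  have hΦ : HasStrictFDerivAt Φ (Φe : (𝒳 × 𝒱) →L[ℝ] (𝒲 × 𝒱)) p := by
    rw [hcoe]
    exact hGs.prodMk (ContinuousLinearMap.snd ℝ 𝒳 𝒱).hasStrictFDerivAt
  set g : 𝒲 × 𝒱 → 𝒳 × 𝒱 := hΦ.localInverse Φ Φe p with hgdef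
  have hgΦp : g (Φ p) = p := hΦ.localInverse_apply_image
  have hΦp : Φ p = ((0 : 𝒲), uhat) := by simp [hΦdef, hp, hfeas]
  have hgs : HasStrictFDerivAt g ((Φe.symm : (𝒲 × 𝒱) →L[ℝ] (𝒳 × 𝒱))) (Φ p) :=
    hΦ.to_localInverse
  have hΦesymm : ∀ r : 𝒲 × 𝒱, Φe.symm r = (e.symm (r.1 - A2 r.2), r.2) := by
    intro r
    rw [hΦedef, ContinuousLinearEquiv.symm_equivOfInverse]
    exact hf2app r
  -- the multiplier
  set M : 𝒲 →L[ℝ] ℝ :=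
    -((J.comp (ContinuousLinearMap.inl ℝ 𝒳 𝒱)).comp (e.symm : 𝒲 →L[ℝ] 𝒳)) with hMdef
  refine ⟨M, ?_, ?_⟩
  · rw [hD1J, ← he]
    apply ContinuousLinearMap.ext; intro x
    simp [hMdef]
  · intro u hu
    set v : 𝒱 := u - uhat with hvdef
    set γ : ℝ → 𝒲 × 𝒱 := fun t => ((0 : 𝒲), uhat + t • v) with hγdef
    have hγ0 : γ 0 = Φ p := by simp [hγdef, hΦp]
    have h1 : HasDerivAt (fun t : ℝ => uhat + t • v) v 0 := by
      simpa using ((hasDerivAt_id (0 : ℝ)).smul_const v).const_add uhat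
    have hγ : HasDerivAt γ (((0 : 𝒲), v)) 0 := (hasDerivAt_const (0 : ℝ) (0 : 𝒲)).prodMk h1
    have hc : HasDerivAt (fun t => g (γ t)) (Φe.symm ((0 : 𝒲), v)) 0 :=
      hgs.hasFDerivAt.comp_hasDerivAt_of_eq 0 hγ hγ0.symm
    set φ : ℝ → ℝ := fun t => 𝒥 (g (γ t)).1 (g (γ t)).2 with hφdef
    have hg0 : g (γ 0) = p := by rw [hγ0, hgΦp]
    have hφd : HasDerivAt φ (J (Φe.symm ((0 : 𝒲), v))) 0 :=
      hJs.hasFDerivAt.comp_hasDerivAt_of_eq 0 hc hg0.symm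
    have hφ0 : φ 0 = 𝒥 xhat uhat := by rw [hφdef]; simp only [hg0]; rfl
    -- eventual feasibility
    have hγcont : Tendsto γ (𝓝 0) (𝓝 (Φ p)) := by
      rw [← hγ0]; exact hγ.continuousAt.tendsto
    have hev : ∀ᶠ t in 𝓝 (0 : ℝ), Φ (g (γ t)) = γ t :=
      hγcont.eventually hΦ.eventually_right_inverse
    have hev2 : ∀ᶠ t in 𝓝[>] (0 : ℝ), φ t ≤ φ 0 := by
      have h01 : Ioc (0 : ℝ) 1 ∈ 𝓝[>] (0 : ℝ) := Ioc_mem_nhdsGT one_pos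
      filter_upwards [hev.filter_mono nhdsWithin_le_nhds, h01] with t ht hti
      have h2 : (g (γ t)).2 = uhat + t • v := congrArg Prod.snd ht
      have h1' : Γ (g (γ t)).1 (g (γ t)).2 = 0 := congrArg Prod.fst ht
      have hmem𝒰 : uhat + t • v ∈ 𝒰 := by
        have hs := hstar hu (a := 1 - t) (b := t) (by linarith [hti.2]) (le_of_lt hti.1)
          (by ring)
        have : (1 - t) • uhat + t • u = uhat + t • v := by
          rw [hvdef, smul_sub, sub_smul, one_smul]; abel
        rwa [this] at hs
      have := hmax (g (γ t)).1 (uhat + t • v) hmem𝒰 (by rwa [h2] at h1')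
      rw [hφ0]
      show 𝒥 (g (γ t)).1 (g (γ t)).2 ≤ 𝒥 xhat uhat
      rw [h2]
      exact this
    -- one-sided derivative at a one-sided max is ≤ 0
    have hd : J (Φe.symm ((0 : 𝒲), v)) ≤ 0 := by
      have hslope := hasDerivWithinAt_iff_tendsto_slope.1 (hφd.hasDerivWithinAt (s := Ioi 0))
      have hdiff : Ioi (0 : ℝ) \ {0} = Ioi 0 := diff_singleton_eq_self (by simp)
      rw [hdiff] at hslope
      refine le_of_tendsto hslope ?_
      filter_upwards [hev2, self_mem_nhdsWithin] with t ht h0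
      have hts : slope φ 0 t = (φ t - φ 0) / t := by
        simp [slope_def_field]
      rw [hts]
      exact div_nonpos_iff.2 (Or.inr ⟨sub_nonpos.2 ht, le_of_lt h0⟩)
    -- identify the derivative with the goal expression
    rw [hD2J, hD2G]
    have hMapp : M (A2 v) = -(J (e.symm (A2 v), 0)) := by simp [hMdef]
    have hval : J (Φe.symm ((0 : 𝒲), v)) = J ((0 : 𝒳), v) + M (A2 v) := by
      rw [hΦesymm, hMapp]
      have h0 : ((e.symm ((0 : 𝒲) - A2 v), v) : 𝒳 × 𝒱)
          = -((e.symm (A2 v), 0) : 𝒳 × 𝒱) + (((0 : 𝒳), v) : 𝒳 × 𝒱) := by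
        simp [Prod.ext_iff]
      rw [h0, map_add, map_neg]
      ring
    have hgoal : (J.comp (ContinuousLinearMap.inr ℝ 𝒳 𝒱)) (u - uhat)
        + M ((A.comp (ContinuousLinearMap.inr ℝ 𝒳 𝒱)) (u - uhat))
        = J (Φe.symm ((0 : 𝒲), v)) := by
      rw [hval, hA2def]
      rfl
    rw [hgoal]
    exact hd
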